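/- For every k ≥ 2 and every l with 0 < l ≤ k², there exists a network with 4k vertices and 4k−1+l edges whose eccentricity diagram has Ω(kl) edges; in particular the eccentricity function on each of l designated edges consists of at least 2k−2 linear segments. -/

import Mathlib

open Set

/-- A finite simple undirected network on `n` vertices with positive edge weights. -/
structure WGraph (n : ℕ) where
  adj : Fin n → Fin n → Bool
  symm : ∀ u v, adj u v = adj v u
  loopless : ∀ u, adj u u = false
  w : Fin n → Fin n → ℝ
  wsymm : ∀ u v, w u v = w v u
  wpos : ∀ u v, adj u v = true → 0 < w u v

variable {n : ℕ}

def WGraph.toSimple (G : WGraph n) : SimpleGraph (Fin n) where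
  Adj u v := G.adj u v = true
  symm := ⟨fun u v h => by show G.adj v u = true; rw [G.symm]; exact h⟩
  loopless := ⟨fun u (h : G.adj u u = true) => by simp [G.loopless u] at h⟩

instance (G : WGraph n) : DecidableRel G.toSimple.Adj :=
  fun u v => inferInstanceAs (Decidable (G.adj u v = true))

/-- Total weight of a walk. -/
noncomputable def WGraph.walkWeight (G : WGraph n) {u v : Fin n}
    (p : G.toSimple.Walk u v) : ℝ :=
  (p.darts.map fun d => G.w d.toProd.1 d.toProd.2).sum

/-- Weighted shortest-path distance between vertices. -/
noncomputable def WGraph.vdist (G : WGraph n) (u v : Fin n) : ℝ :=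
  sInf {x | ∃ p : G.toSimple.Walk u v, x = G.walkWeight p}

/-- Network distance between the point at parameter `a` on edge `uv` and the point at
parameter `b` on edge `st`: the minimum over routes through the endpoints, together with
the direct route along the edge when the two edges coincide. -/
noncomputable def WGraph.pdist (G : WGraph n) (u v : Fin n) (a : ℝ) (s t : Fin n) (b : ℝ) : ℝ :=
  let base := min
    (min (a * G.w u v + G.vdist u s + b * G.w s t)
         (a * G.w u v + G.vdist u t + (1 - b) * G.w s t))
    (min ((1 - a) * G.w u v + G.vdist v s + b * G.w s t)
         ((1 - a) * G.w u v + G.vdist v t + (1 - b) * G.w s t))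
  if u = s ∧ v = t then min (|a - b| * G.w u v) base
  else if u = t ∧ v = s then min (|a - (1 - b)| * G.w u v) base
  else base

/-- Eccentricity of the point at parameter `a` on edge `uv`: the largest network distance
to any point of the network. -/
noncomputable def WGraph.eccOn (G : WGraph n) (u v : Fin n) (a : ℝ) : ℝ :=
  sSup {x | ∃ s t, G.adj s t = true ∧ ∃ b ∈ Icc (0:ℝ) 1, x = G.pdist u v a s t b}

/-- A point of the network: an (oriented) edge together with a parameter in `[0,1]`. -/
abbrev NetPt (n : ℕ) := (Fin n × Fin n) × ℝ

def WGraph.validPt (G : WGraph n) (p : NetPt n) : Prop :=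
  G.adj p.1.1 p.1.2 = true ∧ p.2 ∈ Icc (0:ℝ) 1

noncomputable def WGraph.pdistPt (G : WGraph n) (p q : NetPt n) : ℝ :=
  G.pdist p.1.1 p.1.2 p.2 q.1.1 q.1.2 q.2

noncomputable def WGraph.eccPt (G : WGraph n) (p : NetPt n) : ℝ :=
  G.eccOn p.1.1 p.1.2 p.2

/-- `f` is piecewise affine on `[0,1]` with at most `N` pieces. -/
def PWAffine (f : ℝ → ℝ) (N : ℕ) : Prop :=
  ∃ t : Fin (N + 1) → ℝ, Monotone t ∧ t 0 = 0 ∧ t (Fin.last N) = 1 ∧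
    ∀ i : Fin N, ∃ a b : ℝ, ∀ x ∈ Icc (t i.castSucc) (t i.succ), f x = a * x + b


section Generic
variable {n : ℕ} (G : WGraph n)

lemma WGraph.adj_symm' {u v : Fin n} (h : G.adj u v = true) : G.adj v u = true := by
  rw [G.symm]; exact h

lemma WGraph.walkWeight_nil (u : Fin n) :
    G.walkWeight (SimpleGraph.Walk.nil (u := u)) = 0 := by
  simp [WGraph.walkWeight]

lemma WGraph.walkWeight_cons {u v w : Fin n} (h : G.toSimple.Adj u v)
    (p : G.toSimple.Walk v w) :
    G.walkWeight (SimpleGraph.Walk.cons h p) = G.w u v + G.walkWeight p := by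
  simp [WGraph.walkWeight]

lemma WGraph.walkWeight_nonneg {u v : Fin n} (p : G.toSimple.Walk u v) :
    0 ≤ G.walkWeight p := by
  induction p with
  | nil => simp [WGraph.walkWeight]
  | cons h p ih =>
    rw [G.walkWeight_cons h p]
    have := G.wpos _ _ h
    linarith

lemma WGraph.vdist_nonneg (u v : Fin n) : 0 ≤ G.vdist u v := by
  apply Real.sInf_nonneg
  rintro x ⟨p, rfl⟩
  exact G.walkWeight_nonneg p

lemma WGraph.vdist_bddBelow (u v : Fin n) :
    BddBelow {x | ∃ p : G.toSimple.Walk u v, x = G.walkWeight p} := by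
  exact ⟨0, by rintro x ⟨p, rfl⟩; exact G.walkWeight_nonneg p⟩

lemma WGraph.vdist_le_walk {u v : Fin n} (p : G.toSimple.Walk u v) :
    G.vdist u v ≤ G.walkWeight p :=
  csInf_le (G.vdist_bddBelow u v) ⟨p, rfl⟩

lemma WGraph.vdist_self (u : Fin n) : G.vdist u u = 0 := by
  have h1 := G.vdist_le_walk (SimpleGraph.Walk.nil (u := u))
  rw [G.walkWeight_nil] at h1
  exact le_antisymm h1 (G.vdist_nonneg u u)

/-- extend a shortest path by one edge at the end -/
lemma WGraph.vdist_concat {u s v : Fin n} (hr : G.toSimple.Reachable u s)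
    (h : G.adj s v = true) :
    G.vdist u v ≤ G.vdist u s + G.w s v := by
  have hne : {x | ∃ p : G.toSimple.Walk u s, x = G.walkWeight p}.Nonempty := by
    obtain ⟨p⟩ := hr; exact ⟨G.walkWeight p, p, rfl⟩
  have key : ∀ x ∈ {x | ∃ p : G.toSimple.Walk u s, x = G.walkWeight p},
      G.vdist u v - G.w s v ≤ x := by
    rintro x ⟨p, rfl⟩
    have hadj : G.toSimple.Adj s v := h
    have := G.vdist_le_walk (p.concat hadj)
    have hw : G.walkWeight (p.concat hadj) = G.walkWeight p + G.w s v := by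
      simp [WGraph.walkWeight, SimpleGraph.Walk.darts_concat]
    rw [hw] at this
    linarith
  have := le_csInf hne key
  have : G.vdist u v - G.w s v ≤ G.vdist u s := this
  linarith

lemma WGraph.potential_le (φ : Fin n → ℝ)
    (hφ : ∀ a b, G.adj a b = true → φ b - φ a ≤ G.w a b)
    {u v : Fin n} (p : G.toSimple.Walk u v) : φ v - φ u ≤ G.walkWeight p := by
  induction p with
  | nil => simp [WGraph.walkWeight]
  | @cons a b c h p ih =>
    rw [G.walkWeight_cons h p]
    have := hφ a b h
    linarith

lemma WGraph.vdist_ge (φ : Fin n → ℝ)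
    (hφ : ∀ a b, G.adj a b = true → φ b - φ a ≤ G.w a b)
    {u v : Fin n} (hr : G.toSimple.Reachable u v) :
    φ v - φ u ≤ G.vdist u v := by
  have hne : {x | ∃ p : G.toSimple.Walk u v, x = G.walkWeight p}.Nonempty := by
    obtain ⟨p⟩ := hr; exact ⟨G.walkWeight p, p, rfl⟩
  apply le_csInf hne
  rintro x ⟨p, rfl⟩
  exact G.potential_le φ hφ p

lemma WGraph.pdist_le_base (u v : Fin n) (a : ℝ) (s t : Fin n) (b : ℝ) :
    G.pdist u v a s t b ≤ min
      (min (a * G.w u v + G.vdist u s + b * G.w s t)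
           (a * G.w u v + G.vdist u t + (1 - b) * G.w s t))
      (min ((1 - a) * G.w u v + G.vdist v s + b * G.w s t)
           ((1 - a) * G.w u v + G.vdist v t + (1 - b) * G.w s t)) := by
  unfold WGraph.pdist
  dsimp only
  split_ifs <;> simp [min_le_right, le_refl]

lemma WGraph.pdist_eq_base (u v : Fin n) (a : ℝ) (s t : Fin n) (b : ℝ)
    (h1 : ¬(u = s ∧ v = t)) (h2 : ¬(u = t ∧ v = s)) :
    G.pdist u v a s t b = min
      (min (a * G.w u v + G.vdist u s + b * G.w s t)
           (a * G.w u v + G.vdist u t + (1 - b) * G.w s t))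
      (min ((1 - a) * G.w u v + G.vdist v s + b * G.w s t)
           ((1 - a) * G.w u v + G.vdist v t + (1 - b) * G.w s t)) := by
  unfold WGraph.pdist
  dsimp only
  rw [if_neg h1, if_neg h2]

end Generic

section PWCount

/-- If three equally spaced points violate affineness, any partition must have a
breakpoint strictly between the outer two. -/
lemma exists_breakpoint {f : ℝ → ℝ} {N : ℕ} (t : Fin (N + 1) → ℝ)
    (hmono : Monotone t) (ht0 : t 0 = 0) (ht1 : t (Fin.last N) = 1)
    (haff : ∀ i : Fin N, ∃ a b : ℝ, ∀ x ∈ Icc (t i.castSucc) (t i.succ), f x = a * x + b)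
    {x y z : ℝ} (hx0 : 0 ≤ x) (hxy : x < y) (hyz : y < z) (hz1 : z ≤ 1)
    (hmid : y = (x + z) / 2) (hne : f x + f z ≠ 2 * f y) :
    ∃ i : Fin (N + 1), t i ∈ Ioo x z := by
  by_contra hcon
  push_neg at hcon
  -- the set of indices with t i ≤ x
  have h0mem : t (0 : Fin (N+1)) ≤ x := by rw [ht0]; exact hx0
  classical
  set S : Finset (Fin (N+1)) := Finset.univ.filter (fun i => t i ≤ x) with hS
  have hSne : S.Nonempty := ⟨0, by simp [hS, h0mem]⟩
  set i0 : Fin (N+1) := S.max' hSne with hi0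
  have hi0mem : t i0 ≤ x := by
    have := S.max'_mem hSne
    simp [hS] at this; exact this
  have hi0lt : (i0 : ℕ) < N := by
    by_contra hN
    push_neg at hN
    have hi0eq : i0 = Fin.last N := by
      apply Fin.ext
      have := i0.isLt
      simp only [Fin.last]
      omega
    rw [hi0eq, ht1] at hi0mem
    linarith
  set j : Fin N := ⟨(i0 : ℕ), hi0lt⟩ with hj
  have hcastj : j.castSucc = i0 := by apply Fin.ext; simp [hj]
  have hsuccx : x < t j.succ := by
    by_contra hle
    push_neg at hle
    have hmem : j.succ ∈ S := by simp [hS, hle]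
    have := S.le_max' _ hmem
    rw [← hi0] at this
    have : (j.succ : ℕ) ≤ (i0 : ℕ) := this
    simp [hj] at this
  have hsuccz : z ≤ t j.succ := by
    have := hcon j.succ
    rw [mem_Ioo] at this
    push_neg at this
    rcases lt_or_ge x (t j.succ) with h | h
    · exact this h
    · linarith
  obtain ⟨a, b, hab⟩ := haff j
  rw [hcastj] at hab
  have hfx : f x = a * x + b := hab x ⟨hi0mem, by linarith⟩
  have hfy : f y = a * y + b := hab y ⟨by linarith, by linarith⟩
  have hfz : f z = a * z + b := hab z ⟨by linarith, hsuccz⟩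
  apply hne
  rw [hfx, hfy, hfz, hmid]; ring

lemma pw_lower_bound {f : ℝ → ℝ} {N m : ℕ} (h : PWAffine f N)
    (x y z : ℕ → ℝ)
    (hx0 : ∀ j < m, 0 < x j) (hz1 : ∀ j < m, z j < 1)
    (hxy : ∀ j < m, x j < y j) (hyz : ∀ j < m, y j < z j)
    (hmid : ∀ j < m, y j = (x j + z j) / 2)
    (hne : ∀ j < m, f (x j) + f (z j) ≠ 2 * f (y j))
    (hsep : ∀ j, j + 1 < m → z j < x (j + 1)) :
    m + 1 ≤ N := by
  obtain ⟨t, hmono, ht0, ht1, haff⟩ := h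
  have hN1 : 1 ≤ N := by
    by_contra hN
    push_neg at hN
    interval_cases N
    have : t 0 = t (Fin.last 0) := by congr
    rw [ht0, ht1] at this; norm_num at this
  have key : ∀ j, ∃ i : Fin (N + 1), j < m → t i ∈ Ioo (x j) (z j) := by
    intro j
    by_cases hj : j < m
    · obtain ⟨i, hi⟩ := exists_breakpoint t hmono ht0 ht1 haff (le_of_lt (hx0 j hj))
        (hxy j hj) (hyz j hj) (le_of_lt (hz1 j hj)) (hmid j hj) (hne j hj)
      exact ⟨i, fun _ => hi⟩
    · exact ⟨0, fun h => absurd h hj⟩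
  classical
  choose g hg using key
  have hstep : ∀ j, j + 1 < m → ((g j : ℕ) < (g (j+1) : ℕ)) := by
    intro j hj
    have h1 := hg j (by omega)
    have h2 := hg (j+1) hj
    rw [mem_Ioo] at h1 h2
    have htlt : t (g j) < t (g (j+1)) := by
      have := hsep j hj
      linarith
    by_contra hle
    push_neg at hle
    have : t (g (j+1)) ≤ t (g j) := hmono hle
    linarith
  have hlow : ∀ j, j < m → j + 1 ≤ (g j : ℕ) := by
    intro j
    induction j with
    | zero =>
      intro hj
      have h1 := hg 0 hj
      rw [mem_Ioo] at h1
      by_contra hle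
      push_neg at hle
      have hz : g 0 = 0 := by
        apply Fin.ext
        simp only [Fin.val_zero]
        omega
      rw [hz, ht0] at h1
      have := hx0 0 hj
      linarith
    | succ j ih =>
      intro hj
      have h1 := hstep j hj
      have h2 := ih (by omega)
      omega
  rcases Nat.eq_zero_or_pos m with rfl | hm
  · omega
  have hjm : m - 1 < m := by omega
  have hlast : ((g (m-1)) : ℕ) < N := by
    have h1 := hg (m-1) hjm
    rw [mem_Ioo] at h1
    by_contra hle
    push_neg at hle
    have heq : g (m-1) = Fin.last N := by
      apply Fin.ext
      have := (g (m-1)).isLt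
      simp only [Fin.last]
      omega
    rw [heq, ht1] at h1
    have := hz1 (m-1) hjm
    linarith
  have := hlow (m-1) hjm
  omega

end PWCount

section Construction

/-- oriented edge relation of the construction -/
def Rel0 (k l a b : ℕ) : Prop :=
  (b = a + 1 ∧ b < 3*k) ∨ (b = a + 2*k ∧ k ≤ a ∧ a < 2*k) ∨
  (a < k ∧ 2*k ≤ b ∧ b < 3*k ∧ a + k * (b - 2*k) < l)

instance Rel0.dec (k l a b : ℕ) : Decidable (Rel0 k l a b) := by
  unfold Rel0; infer_instance

lemma Rel0.lt {k l a b : ℕ} (h : Rel0 k l a b) : a < b := by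
  unfold Rel0 at h; omega

lemma Rel0.kpos {k l a b : ℕ} (h : Rel0 k l a b) : 0 < k := by
  unfold Rel0 at h; omega

/-- weight function on vertex indices -/
noncomputable def wfun (k x y : ℕ) : ℝ :=
  if (y = x + 2*k ∧ k ≤ x) ∨ (x = y + 2*k ∧ k ≤ y) then (40*k : ℝ)
  else if (x < k ∧ 2*k ≤ y) ∨ (y < k ∧ 2*k ≤ x) then (4*k : ℝ) else 1

lemma wfun_symm (k x y : ℕ) : wfun k x y = wfun k y x := by
  unfold wfun
  have h1 : (y = x + 2*k ∧ k ≤ x ∨ x = y + 2*k ∧ k ≤ y) ↔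
      (x = y + 2*k ∧ k ≤ y ∨ y = x + 2*k ∧ k ≤ x) := or_comm
  have h2 : (x < k ∧ 2*k ≤ y ∨ y < k ∧ 2*k ≤ x) ↔
      (y < k ∧ 2*k ≤ x ∨ x < k ∧ 2*k ≤ y) := or_comm
  simp only [h1, h2]

lemma wfun_path {k x y : ℕ} (h1 : y = x + 1) (h2 : y < 3*k) : wfun k x y = 1 := by
  unfold wfun
  rw [if_neg (by omega), if_neg (by omega)]

lemma wfun_spike {k x y : ℕ} (h1 : y = x + 2*k) (h2 : k ≤ x) (h3 : x < 2*k) :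
    wfun k x y = (40*k : ℝ) := by
  unfold wfun
  rw [if_pos (by omega)]

lemma wfun_desig {k x y : ℕ} (h1 : x < k) (h2 : 2*k ≤ y) (h3 : y < 3*k) :
    wfun k x y = (4*k : ℝ) := by
  unfold wfun
  rw [if_neg (by omega), if_pos (by omega)]

noncomputable def Gkl (k l : ℕ) : WGraph (4*k) where
  adj u v := decide (Rel0 k l u.val v.val ∨ Rel0 k l v.val u.val)
  symm u v := by rw [decide_eq_decide]; exact or_comm
  loopless u := by
    simp only [decide_eq_false_iff_not]
    rintro (h | h) <;> exact absurd h.lt (lt_irrefl _)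
  w u v := wfun k u.val v.val
  wsymm u v := wfun_symm k u.val v.val
  wpos u v h := by
    simp only [decide_eq_true_eq] at h
    have hk : 0 < k := by rcases h with h | h <;> exact h.kpos
    have hkR : (0:ℝ) < k := by exact_mod_cast hk
    show 0 < wfun k u.val v.val
    unfold wfun
    split_ifs <;> linarith

lemma Gkl_adj_iff {k l : ℕ} (u v : Fin (4*k)) :
    (Gkl k l).adj u v = true ↔ Rel0 k l u.val v.val ∨ Rel0 k l v.val u.val := by
  simp [Gkl]

lemma Gkl_w_eq {k l : ℕ} (u v : Fin (4*k)) : (Gkl k l).w u v = wfun k u.val v.val := rfl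

end Construction

section Dist

variable {k l : ℕ}

lemma Gkl_adj_of_rel {a b : ℕ} (ha : a < 4*k) (hb : b < 4*k) (h : Rel0 k l a b) :
    (Gkl k l).adj ⟨a, ha⟩ ⟨b, hb⟩ = true := by
  rw [Gkl_adj_iff]; exact Or.inl h

lemma Gkl_adj_path {a : ℕ} (h : a + 1 < 3*k) (ha : a < 4*k) (ha1 : a + 1 < 4*k) :
    (Gkl k l).adj ⟨a, ha⟩ ⟨a+1, ha1⟩ = true :=
  Gkl_adj_of_rel _ _ (Or.inl ⟨rfl, h⟩)

lemma Gkl_adj_spike {t : ℕ} (h : t < k) (h1 : k + t < 4*k) (h2 : 3*k + t < 4*k) :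
    (Gkl k l).adj ⟨k + t, h1⟩ ⟨3*k + t, h2⟩ = true :=
  Gkl_adj_of_rel _ _ (Or.inr (Or.inl ⟨by omega, by omega, by omega⟩))

lemma Gkl_reach_up {c : ℕ} (hc : c < 4*k) :
    ∀ d (hd : c + d < 3*k) (hcd : c + d < 4*k),
      (Gkl k l).toSimple.Reachable ⟨c, hc⟩ ⟨c + d, hcd⟩ := by
  intro d
  induction d with
  | zero => intro _ _; rfl
  | succ d ih =>
    intro hd hcd
    have h1 : c + d < 4*k := by omega
    refine (ih (by omega) h1).trans ?_
    have hadj : (Gkl k l).toSimple.Adj ⟨c + d, h1⟩ ⟨c + d + 1, hcd⟩ :=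
      Gkl_adj_path (by omega) _ _
    exact hadj.reachable

lemma Gkl_reach_path {c s : ℕ} (hc3 : c < 3*k) (hs3 : s < 3*k)
    (hc : c < 4*k) (hs : s < 4*k) :
    (Gkl k l).toSimple.Reachable ⟨c, hc⟩ ⟨s, hs⟩ := by
  rcases le_or_gt c s with h | h
  · have h1 := Gkl_reach_up (l := l) hc (s - c) (by omega) (by omega)
    have he : (⟨c + (s - c), by omega⟩ : Fin (4*k)) = ⟨s, hs⟩ := Fin.ext (by simp; omega)
    rwa [he] at h1
  · have h1 := Gkl_reach_up (l := l) hs (c - s) (by omega) (by omega)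
    have he : (⟨s + (c - s), by omega⟩ : Fin (4*k)) = ⟨c, hc⟩ := Fin.ext (by simp; omega)
    rw [he] at h1
    exact h1.symm

lemma Gkl_reach_tip {c t : ℕ} (hc3 : c < 3*k) (ht : t < k)
    (hc : c < 4*k) (h2 : 3*k + t < 4*k) :
    (Gkl k l).toSimple.Reachable ⟨c, hc⟩ ⟨3*k + t, h2⟩ := by
  refine (Gkl_reach_path (l := l) (s := k + t) hc3 (by omega) hc (by omega)).trans ?_
  exact SimpleGraph.Adj.reachable (Gkl_adj_spike ht (by omega) h2 : _)

lemma Gkl_reach_all (hk : 2 ≤ k) (u v : Fin (4*k)) :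
    (Gkl k l).toSimple.Reachable u v := by
  have key : ∀ w : Fin (4*k), (Gkl k l).toSimple.Reachable ⟨0, by omega⟩ w := by
    intro w
    obtain ⟨m, hm⟩ := w
    rcases lt_or_ge m (3*k) with h | h
    · exact Gkl_reach_path (by omega) h (by omega) hm
    · have he : (⟨m, hm⟩ : Fin (4*k)) = ⟨3*k + (m - 3*k), by omega⟩ := Fin.ext (by simp; omega)
      rw [he]
      exact Gkl_reach_tip (by omega) (by omega) (by omega) (by omega)
  exact (key u).symm.trans (key v)

lemma Gkl_connected (hk : 2 ≤ k) : (Gkl k l).toSimple.Connected := by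
  rw [SimpleGraph.connected_iff]
  exact ⟨Gkl_reach_all hk, ⟨⟨0, by omega⟩⟩⟩

-- vdist upper bounds
lemma Gkl_vdist_up {c : ℕ} (hc : c < 4*k) :
    ∀ d (_ : c + d < 3*k) (hcd : c + d < 4*k),
      (Gkl k l).vdist ⟨c, hc⟩ ⟨c + d, hcd⟩ ≤ (d : ℝ) := by
  intro d
  induction d with
  | zero =>
    intro _ _
    simp [WGraph.vdist_self]
  | succ d ih =>
    intro hd hcd
    have h1 : c + d < 4*k := by omega
    have hr : (Gkl k l).toSimple.Reachable ⟨c, hc⟩ ⟨c + d, h1⟩ :=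
      Gkl_reach_up hc d (by omega) h1
    have hadj : (Gkl k l).adj ⟨c + d, h1⟩ ⟨c + d + 1, hcd⟩ = true :=
      Gkl_adj_path (by omega) _ _
    have h2 := (Gkl k l).vdist_concat hr hadj
    have hw : (Gkl k l).w ⟨c + d, h1⟩ ⟨c + d + 1, hcd⟩ = 1 := by
      rw [Gkl_w_eq]
      show wfun k (c + d) (c + d + 1) = 1
      exact wfun_path rfl (by omega)
    have hih := ih (by omega) h1
    rw [hw] at h2
    have hfin : (Gkl k l).vdist ⟨c, hc⟩ ⟨c + d + 1, hcd⟩ ≤ ((d:ℝ) + 1) := by linarith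
    have hcast : ((d + 1 : ℕ) : ℝ) = (d:ℝ) + 1 := by push_cast; ring
    rw [hcast]
    exact hfin

lemma Gkl_vdist_down {c : ℕ} (hc : c < 4*k) (hc3 : c < 3*k) :
    ∀ d (_ : d ≤ c) (hcd : c - d < 4*k),
      (Gkl k l).vdist ⟨c, hc⟩ ⟨c - d, hcd⟩ ≤ (d : ℝ) := by
  intro d
  induction d with
  | zero =>
    intro _ _
    simp [WGraph.vdist_self]
  | succ d ih =>
    intro hd hcd
    have h1 : c - d < 4*k := by omega
    have hr : (Gkl k l).toSimple.Reachable ⟨c, hc⟩ ⟨c - d, h1⟩ :=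
      Gkl_reach_path hc3 (by omega) hc h1
    have hadj : (Gkl k l).adj ⟨c - d, h1⟩ ⟨c - (d+1), hcd⟩ = true := by
      rw [Gkl_adj_iff]
      refine Or.inr (Or.inl ?_)
      show (c - d) = (c - (d+1)) + 1 ∧ c - d < 3*k
      omega
    have h2 := (Gkl k l).vdist_concat hr hadj
    have hw : (Gkl k l).w ⟨c - d, h1⟩ ⟨c - (d+1), hcd⟩ = 1 := by
      rw [Gkl_w_eq]
      show wfun k (c - d) (c - (d+1)) = 1
      rw [wfun_symm]
      exact wfun_path (by omega) (by omega)
    have hih := ih (by omega) h1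
    rw [hw] at h2
    have hfin : (Gkl k l).vdist ⟨c, hc⟩ ⟨c - (d+1), hcd⟩ ≤ ((d:ℝ) + 1) := by linarith
    have hcast : ((d + 1 : ℕ) : ℝ) = (d:ℝ) + 1 := by push_cast; ring
    rw [hcast]
    exact hfin

lemma Gkl_vdist_path_le {c s : ℕ} (hc3 : c < 3*k) (hs3 : s < 3*k)
    (hc : c < 4*k) (hs : s < 4*k) :
    (Gkl k l).vdist ⟨c, hc⟩ ⟨s, hs⟩ ≤ |(s : ℝ) - (c : ℝ)| := by
  rcases le_or_gt c s with h | h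
  · have h1 := Gkl_vdist_up (l := l) hc (s - c) (by omega) (by omega)
    have he : (⟨c + (s - c), by omega⟩ : Fin (4*k)) = ⟨s, hs⟩ := Fin.ext (by simp; omega)
    rw [he] at h1
    refine h1.trans (le_of_eq ?_)
    rw [Nat.cast_sub h, abs_of_nonneg (sub_nonneg.mpr (Nat.cast_le.mpr h))]
  · have h1 := Gkl_vdist_down (l := l) hc hc3 (c - s) (by omega) (by omega)
    have he : (⟨c - (c - s), by omega⟩ : Fin (4*k)) = ⟨s, hs⟩ := Fin.ext (by simp; omega)
    rw [he] at h1
    have he2 : ((c - s : ℕ) : ℝ) = |(s : ℝ) - (c : ℝ)| := by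
      rw [Nat.cast_sub (le_of_lt h), abs_of_nonpos (by
        have h3 := Nat.cast_lt (α := ℝ).mpr h
        linarith)]
      ring
    rw [he2] at h1
    exact h1

lemma Gkl_vdist_tip_le {c t : ℕ} (hc3 : c < 3*k) (ht : t < k)
    (hc : c < 4*k) (h2 : 3*k + t < 4*k) :
    (Gkl k l).vdist ⟨c, hc⟩ ⟨3*k + t, h2⟩ ≤ |((k:ℝ) + t) - (c : ℝ)| + 40*k := by
  have hr : (Gkl k l).toSimple.Reachable ⟨c, hc⟩ ⟨k + t, by omega⟩ :=
    Gkl_reach_path hc3 (by omega) hc (by omega)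
  have hadj : (Gkl k l).adj (⟨k + t, by omega⟩ : Fin (4*k)) ⟨3*k + t, h2⟩ = true :=
    Gkl_adj_spike ht _ _
  have h1 := (Gkl k l).vdist_concat hr hadj
  have hw : (Gkl k l).w (⟨k + t, by omega⟩ : Fin (4*k)) ⟨3*k + t, h2⟩ = (40*k : ℝ) := by
    rw [Gkl_w_eq]
    show wfun k (k + t) (3*k + t) = (40*k : ℝ)
    exact wfun_spike (by omega) (by omega) (by omega)
  rw [hw] at h1
  have h3 := Gkl_vdist_path_le (l := l) hc3 (show k + t < 3*k by omega) hc (by omega)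
  have he : ((k + t : ℕ) : ℝ) = (k : ℝ) + t := by push_cast; ring
  rw [he] at h3
  linarith

-- the potential function
noncomputable def phi (k : ℕ) (c : ℕ) (s : Fin (4*k)) : ℝ :=
  if s.val < 3*k then |(s.val : ℝ) - (c : ℝ)|
  else |((s.val : ℝ) - 2*(k:ℝ)) - (c : ℝ)| + 40*k

lemma phi_lip {c : ℕ} (hc : c < 3*k) :
    ∀ a b : Fin (4*k), (Gkl k l).adj a b = true → phi k c b - phi k c a ≤ (Gkl k l).w a b := by
  have key : ∀ a b : Fin (4*k), Rel0 k l a.val b.val →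
      |phi k c b - phi k c a| ≤ wfun k a.val b.val := by
    intro a b h
    have hx : a.val < 4*k := a.isLt
    have hy : b.val < 4*k := b.isLt
    rcases h with ⟨h1, h2⟩ | ⟨h1, h2, h3⟩ | ⟨h1, h2, h3, h4⟩
    · -- path edge
      rw [wfun_path h1 h2]
      unfold phi
      rw [if_pos (show b.val < 3*k by omega), if_pos (show a.val < 3*k by omega)]
      refine (abs_abs_sub_abs_le_abs_sub _ _).trans (le_of_eq ?_)
      have hc1 : (b.val : ℝ) = (a.val : ℝ) + 1 := by exact_mod_cast h1
      rw [show ((b.val:ℝ) - c - ((a.val:ℝ) - c)) = (b.val:ℝ) - a.val by ring, hc1]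
      simp
    · -- spike edge
      rw [wfun_spike h1 h2 h3]
      unfold phi
      rw [if_neg (show ¬ b.val < 3*k by omega), if_pos (show a.val < 3*k by omega)]
      have hyx : (b.val : ℝ) - 2*(k:ℝ) = (a.val : ℝ) := by
        have hc1 : (b.val : ℝ) = (a.val : ℝ) + 2*(k:ℝ) := by exact_mod_cast h1
        linarith
      rw [hyx]
      rw [show (|(a.val:ℝ) - c| + 40*k - |(a.val:ℝ) - c|) = (40*(k:ℝ)) by ring,
        abs_of_nonneg (by positivity)]
    · -- designated edge
      rw [wfun_desig h1 h2 h3]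
      unfold phi
      rw [if_pos (show b.val < 3*k by omega), if_pos (show a.val < 3*k by omega)]
      refine (abs_abs_sub_abs_le_abs_sub _ _).trans ?_
      rw [show ((b.val:ℝ) - c - ((a.val:ℝ) - c)) = (b.val:ℝ) - a.val by ring]
      have hxy : (a.val : ℝ) ≤ b.val := Nat.cast_le.mpr (by omega)
      rw [abs_of_nonneg (by linarith)]
      have hy' : (b.val : ℝ) < 3*(k:ℝ) := by exact_mod_cast h3
      have hx' : (0:ℝ) ≤ a.val := Nat.cast_nonneg _
      have hk' : (0:ℝ) ≤ k := Nat.cast_nonneg _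
      linarith
  intro a b hadj
  rw [Gkl_adj_iff] at hadj
  rcases hadj with h | h
  · have h5 := key a b h
    rw [Gkl_w_eq]
    exact (abs_le.mp h5).2
  · have h5 := key b a h
    rw [Gkl_w_eq, wfun_symm]
    rw [abs_sub_comm] at h5
    exact (abs_le.mp h5).2

lemma Gkl_vdist_path_ge (hk : 2 ≤ k) {c s : ℕ} (hc3 : c < 3*k) (hs3 : s < 3*k)
    (hc : c < 4*k) (hs : s < 4*k) :
    |(s : ℝ) - (c : ℝ)| ≤ (Gkl k l).vdist ⟨c, hc⟩ ⟨s, hs⟩ := by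
  have h1 := (Gkl k l).vdist_ge (phi k c) (phi_lip hc3) (Gkl_reach_all hk ⟨c, hc⟩ ⟨s, hs⟩)
  unfold phi at h1
  rw [if_pos (show s < 3*k from hs3), if_pos (show c < 3*k from hc3)] at h1
  simpa using h1

lemma Gkl_vdist_tip_ge (hk : 2 ≤ k) {c t : ℕ} (hc3 : c < 3*k) (ht : t < k)
    (hc : c < 4*k) (h2 : 3*k + t < 4*k) :
    |((k:ℝ) + t) - (c : ℝ)| + 40*k ≤ (Gkl k l).vdist ⟨c, hc⟩ ⟨3*k + t, h2⟩ := by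
  have h1 := (Gkl k l).vdist_ge (phi k c) (phi_lip hc3) (Gkl_reach_all hk ⟨c, hc⟩ ⟨3*k + t, h2⟩)
  unfold phi at h1
  rw [if_neg (show ¬ 3*k + t < 3*k by omega), if_pos (show c < 3*k from hc3)] at h1
  have he : ((3*k + t : ℕ) : ℝ) - 2*(k:ℝ) = (k:ℝ) + t := by push_cast; ring
  rw [show (((⟨3*k+t, h2⟩ : Fin (4*k)).val : ℝ)) = ((3*k + t : ℕ) : ℝ) from rfl, he] at h1
  simpa using h1

end Dist

section EccHelpers
variable {n : ℕ} (G : WGraph n)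

lemma WGraph.pdist_le_T1 (u v : Fin n) (a : ℝ) (s t : Fin n) (b : ℝ) :
    G.pdist u v a s t b ≤ a * G.w u v + G.vdist u s + b * G.w s t :=
  (G.pdist_le_base u v a s t b).trans ((min_le_left _ _).trans (min_le_left _ _))

lemma WGraph.pdist_le_T2 (u v : Fin n) (a : ℝ) (s t : Fin n) (b : ℝ) :
    G.pdist u v a s t b ≤ a * G.w u v + G.vdist u t + (1 - b) * G.w s t :=
  (G.pdist_le_base u v a s t b).trans ((min_le_left _ _).trans (min_le_right _ _))

lemma WGraph.pdist_le_T3 (u v : Fin n) (a : ℝ) (s t : Fin n) (b : ℝ) :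
    G.pdist u v a s t b ≤ (1 - a) * G.w u v + G.vdist v s + b * G.w s t :=
  (G.pdist_le_base u v a s t b).trans ((min_le_right _ _).trans (min_le_left _ _))

lemma WGraph.pdist_le_T4 (u v : Fin n) (a : ℝ) (s t : Fin n) (b : ℝ) :
    G.pdist u v a s t b ≤ (1 - a) * G.w u v + G.vdist v t + (1 - b) * G.w s t :=
  (G.pdist_le_base u v a s t b).trans ((min_le_right _ _).trans (min_le_right _ _))

lemma WGraph.le_pdist (G : WGraph n) {u v s t : Fin n}
    (h1 : ¬(u = s ∧ v = t)) (h2 : ¬(u = t ∧ v = s)) {a b M : ℝ}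
    (hT1 : M ≤ a * G.w u v + G.vdist u s + b * G.w s t)
    (hT2 : M ≤ a * G.w u v + G.vdist u t + (1 - b) * G.w s t)
    (hT3 : M ≤ (1 - a) * G.w u v + G.vdist v s + b * G.w s t)
    (hT4 : M ≤ (1 - a) * G.w u v + G.vdist v t + (1 - b) * G.w s t) :
    M ≤ G.pdist u v a s t b := by
  rw [G.pdist_eq_base u v a s t b h1 h2]
  exact le_min (le_min hT1 hT2) (le_min hT3 hT4)

end EccHelpers

lemma min_symm_abs (x y : ℝ) : min (x + y) (x - y) = x - |y| := by
  rcases abs_cases y with ⟨h1, h2⟩ | ⟨h1, h2⟩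
  · rw [h1, min_eq_right (by linarith)]
  · rw [h1, min_eq_left (by linarith)]; ring

lemma nat_cast_gap (t t₀ : ℕ) : ((t:ℝ) - t₀ = 0) ∨ 1 ≤ |(t:ℝ) - (t₀:ℝ)| := by
  rcases Nat.lt_trichotomy t t₀ with h | h | h
  · right
    have h1 : (t:ℝ) + 1 ≤ t₀ := by exact_mod_cast h
    rw [abs_of_nonpos (by linarith)]
    linarith
  · left; rw [h]; ring
  · right
    have h1 : (t₀:ℝ) + 1 ≤ t := by exact_mod_cast h
    rw [abs_of_nonneg (by linarith)]
    linarith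

lemma abs_le_abs_add_gap {c d : ℝ} (hc : |c| ≤ 1/2) (hd : d = 0 ∨ 1 ≤ |d|) :
    |c| ≤ |c + d| := by
  rcases hd with rfl | hd
  · simp
  · rcases abs_cases (c + d) with ⟨h1, h2⟩ | ⟨h1, h2⟩ <;>
    rcases abs_cases c with ⟨h3, h4⟩ | ⟨h3, h4⟩ <;>
    rcases abs_cases d with ⟨h5, h6⟩ | ⟨h5, h6⟩ <;> linarith

section EccEval

variable {k l α q : ℕ}

/-- upper bound on all the candidate distances from a point on the designated edge -/
lemma ecc_ub (hk : 2 ≤ k) (hα : α < k) (hq : q < k) {a : ℝ} (ha0 : 0 ≤ a) (ha1 : a ≤ 1)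
    {M : ℝ} (hM1 : 11*(k:ℝ) + 1 ≤ M)
    (hM2 : ∀ t : ℕ, t < k →
      min (a*(4*(k:ℝ)) + ((k:ℝ) + t - α)) ((1-a)*(4*(k:ℝ)) + ((k:ℝ) + q - t)) + 40*(k:ℝ) ≤ M)
    (s t : Fin (4*k)) (hadj : (Gkl k l).adj s t = true) {b : ℝ} (hb0 : 0 ≤ b) (hb1 : b ≤ 1) :
    (Gkl k l).pdist ⟨α, by omega⟩ ⟨2*k + q, by omega⟩ a s t b ≤ M := by
  have hkR : (2:ℝ) ≤ (k:ℝ) := by exact_mod_cast hk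
  have hαR : (α:ℝ) < k := by exact_mod_cast hα
  have hαR0 : (0:ℝ) ≤ α := Nat.cast_nonneg _
  have hqR : (q:ℝ) < k := by exact_mod_cast hq
  have hqR0 : (0:ℝ) ≤ q := Nat.cast_nonneg _
  set vα : Fin (4*k) := ⟨α, by omega⟩ with hvα
  set vβ : Fin (4*k) := ⟨2*k + q, by omega⟩ with hvβ
  have hwαβ : (Gkl k l).w vα vβ = 4*(k:ℝ) := by
    rw [Gkl_w_eq]
    show wfun k α (2*k+q) = _
    exact wfun_desig hα (by omega) (by omega)
  -- distance upper bounds from the endpoints to path vertices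
  have hDα : ∀ m : ℕ, m < 3*k → ∀ (hm : m < 4*k),
      (Gkl k l).vdist vα ⟨m, hm⟩ ≤ 3*(k:ℝ) := by
    intro m hm3 hm
    refine (Gkl_vdist_path_le (by omega) hm3 (by omega) hm).trans ?_
    have h1 : (m:ℝ) < 3*k := by exact_mod_cast hm3
    have h2 : (0:ℝ) ≤ m := Nat.cast_nonneg _
    rcases abs_cases ((m:ℝ) - α) with ⟨h3, h4⟩ | ⟨h3, h4⟩ <;> linarith
  rw [Gkl_adj_iff] at hadj
  -- helper: s is Fin eta-expandable
  have hseta : s = ⟨s.val, s.isLt⟩ := rfl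
  have hteta : t = ⟨t.val, t.isLt⟩ := rfl
  have cheap : s.val < 3*k → (Gkl k l).w s t ≤ 4*(k:ℝ) → 0 ≤ (Gkl k l).w s t →
      (Gkl k l).pdist vα vβ a s t b ≤ M := by
    intro hs3 hwst hw0
    have h1 := (Gkl k l).pdist_le_T1 vα vβ a s t b
    have h2 : (Gkl k l).vdist vα s ≤ 3*(k:ℝ) := by
      rw [hseta]; exact hDα s.val hs3 s.isLt
    have h3 : a * (Gkl k l).w vα vβ ≤ 4*(k:ℝ) := by
      rw [hwαβ]; nlinarith
    have h4 : b * (Gkl k l).w s t ≤ 4*(k:ℝ) := by nlinarith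
    linarith
  -- spike case helper, forward orientation
  rcases hadj with hrel | hrel
  · rcases hrel with ⟨h1, h2⟩ | ⟨h1, h2, h3⟩ | ⟨h1, h2, h3, h4⟩
    · -- path edge s -> s+1
      have hw : (Gkl k l).w s t = 1 := by
        rw [Gkl_w_eq]; exact wfun_path h1 h2
      exact cheap (by omega) (by rw [hw]; linarith) (by rw [hw]; linarith)
    · -- spike edge, s = base, t = tip
      set tt : ℕ := s.val - k with htt
      have hsv : s.val = k + tt := by omega
      have httk : tt < k := by omega
      have hwst : (Gkl k l).w s t = 40*(k:ℝ) := by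
        rw [Gkl_w_eq]; exact wfun_spike h1 h2 h3
      have hT1 := (Gkl k l).pdist_le_T1 vα vβ a s t b
      have hT3 := (Gkl k l).pdist_le_T3 vα vβ a s t b
      have hd1 : (Gkl k l).vdist vα s ≤ (k:ℝ) + tt - α := by
        rw [hseta]
        refine (Gkl_vdist_path_le (by omega) (by omega) (by omega) s.isLt).trans (le_of_eq ?_)
        have : ((s.val : ℕ):ℝ) = (k:ℝ) + tt := by rw [hsv]; push_cast; ring
        rw [this, abs_of_nonneg (by linarith [Nat.cast_nonneg (α := ℝ) tt])]
      have hd3 : (Gkl k l).vdist vβ s ≤ (k:ℝ) + q - tt := by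
        rw [hseta]
        refine (Gkl_vdist_path_le (by omega) (by omega) (by omega) s.isLt).trans (le_of_eq ?_)
        have he1 : ((s.val : ℕ):ℝ) = (k:ℝ) + tt := by rw [hsv]; push_cast; ring
        have he2 : (((2*k + q : ℕ)):ℝ) = 2*(k:ℝ) + q := by push_cast; ring
        rw [he1, he2, abs_of_nonpos (by
          have : (tt:ℝ) < k := by exact_mod_cast httk
          linarith)]
        ring
      have hbw : b * (40*(k:ℝ)) ≤ 40*(k:ℝ) := by nlinarith
      have hfin := hM2 tt httk
      rw [hwαβ, hwst] at hT1 hT3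
      rcases le_total (a*(4*(k:ℝ)) + ((k:ℝ) + tt - α)) ((1-a)*(4*(k:ℝ)) + ((k:ℝ) + q - tt)) with hmin | hmin
      · rw [min_eq_left hmin] at hfin; linarith
      · rw [min_eq_right hmin] at hfin; linarith
    · -- designated edge
      have hw : (Gkl k l).w s t = 4*(k:ℝ) := by
        rw [Gkl_w_eq]; exact wfun_desig h1 h2 h3
      exact cheap (by omega) (by rw [hw]) (by rw [hw]; linarith)
  · rcases hrel with ⟨h1, h2⟩ | ⟨h1, h2, h3⟩ | ⟨h1, h2, h3, h4⟩
    · -- path edge t -> t+1 (s = t+1)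
      have hw : (Gkl k l).w s t = 1 := by
        rw [Gkl_w_eq, wfun_symm]; exact wfun_path h1 h2
      exact cheap (by omega) (by rw [hw]; linarith) (by rw [hw]; linarith)
    · -- spike edge, t = base, s = tip
      set tt : ℕ := t.val - k with htt
      have hsv : t.val = k + tt := by omega
      have httk : tt < k := by omega
      have hwst : (Gkl k l).w s t = 40*(k:ℝ) := by
        rw [Gkl_w_eq, wfun_symm]; exact wfun_spike h1 h2 h3
      have hT2 := (Gkl k l).pdist_le_T2 vα vβ a s t b
      have hT4 := (Gkl k l).pdist_le_T4 vα vβ a s t b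
      have hd1 : (Gkl k l).vdist vα t ≤ (k:ℝ) + tt - α := by
        rw [hteta]
        refine (Gkl_vdist_path_le (by omega) (by omega) (by omega) t.isLt).trans (le_of_eq ?_)
        have : ((t.val : ℕ):ℝ) = (k:ℝ) + tt := by rw [hsv]; push_cast; ring
        rw [this, abs_of_nonneg (by linarith [Nat.cast_nonneg (α := ℝ) tt])]
      have hd3 : (Gkl k l).vdist vβ t ≤ (k:ℝ) + q - tt := by
        rw [hteta]
        refine (Gkl_vdist_path_le (by omega) (by omega) (by omega) t.isLt).trans (le_of_eq ?_)
        have he1 : ((t.val : ℕ):ℝ) = (k:ℝ) + tt := by rw [hsv]; push_cast; ring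
        have he2 : (((2*k + q : ℕ)):ℝ) = 2*(k:ℝ) + q := by push_cast; ring
        rw [he1, he2, abs_of_nonpos (by
          have : (tt:ℝ) < k := by exact_mod_cast httk
          linarith)]
        ring
      have hbw : (1-b) * (40*(k:ℝ)) ≤ 40*(k:ℝ) := by nlinarith
      have hfin := hM2 tt httk
      rw [hwαβ, hwst] at hT2 hT4
      rcases le_total (a*(4*(k:ℝ)) + ((k:ℝ) + tt - α)) ((1-a)*(4*(k:ℝ)) + ((k:ℝ) + q - tt)) with hmin | hmin
      · rw [min_eq_left hmin] at hfin; linarith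
      · rw [min_eq_right hmin] at hfin; linarith
    · -- designated edge reversed
      have hw : (Gkl k l).w s t = 4*(k:ℝ) := by
        rw [Gkl_w_eq, wfun_symm]; exact wfun_desig h1 h2 h3
      exact cheap (by omega) (by rw [hw]) (by rw [hw]; linarith)

end EccEval

noncomputable def astar (k α q t : ℕ) : ℝ := 1/2 + ((α:ℝ) + q - 2*t)/(8*(k:ℝ))

noncomputable def Hval (k α q : ℕ) : ℝ := 40*(k:ℝ) + (4*(k:ℝ) + (2*(k:ℝ) + q - α))/2

section EvalSec
variable {k l α q : ℕ}

set_option maxHeartbeats 1000000 in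
lemma ecc_eval (hk : 2 ≤ k) (hα : α < k) (hq : q < k) (t₀ : ℕ) (ht₀ : t₀ < k)
    (c : ℝ) (hc : |c| ≤ 1/2) :
    (Gkl k l).eccOn ⟨α, by omega⟩ ⟨2*k + q, by omega⟩ (astar k α q t₀ + c/(4*(k:ℝ)))
      = Hval k α q - |c| := by
  have hkR : (2:ℝ) ≤ (k:ℝ) := by exact_mod_cast hk
  have hkne : (k:ℝ) ≠ 0 := by linarith
  have hαR : (α:ℝ) + 1 ≤ k := by exact_mod_cast hα
  have hαR0 : (0:ℝ) ≤ α := Nat.cast_nonneg _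
  have hqR : (q:ℝ) + 1 ≤ k := by exact_mod_cast hq
  have hqR0 : (0:ℝ) ≤ q := Nat.cast_nonneg _
  have ht₀R : (t₀:ℝ) + 1 ≤ k := by exact_mod_cast ht₀
  have ht₀R0 : (0:ℝ) ≤ t₀ := Nat.cast_nonneg _
  have hcabs := abs_nonneg c
  have hcle := neg_abs_le c
  have hcge := le_abs_self c
  set a : ℝ := astar k α q t₀ + c/(4*(k:ℝ)) with ha
  have hA : a * (8*(k:ℝ)) = 4*(k:ℝ) + ((α:ℝ) + q - 2*t₀) + 2*c := by
    rw [ha]; unfold astar; field_simp; ring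
  have ha0 : 0 ≤ a := by nlinarith
  have ha1 : a ≤ 1 := by nlinarith
  have e1 : ∀ t : ℕ, a*(4*(k:ℝ)) + ((k:ℝ) + t - α)
      = (4*(k:ℝ) + (2*(k:ℝ) + q - α))/2 + (c + ((t:ℝ) - t₀)) := by
    intro t
    have h8 : a*(4*(k:ℝ)) = (a * (8*(k:ℝ)))/2 := by ring
    rw [h8, hA]; ring
  have e2 : ∀ t : ℕ, (1-a)*(4*(k:ℝ)) + ((k:ℝ) + q - t)
      = (4*(k:ℝ) + (2*(k:ℝ) + q - α))/2 - (c + ((t:ℝ) - t₀)) := by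
    intro t
    have h8 : (1-a)*(4*(k:ℝ)) = 4*(k:ℝ) - (a * (8*(k:ℝ)))/2 := by ring
    rw [h8, hA]; ring
  have hTent : ∀ t : ℕ,
      min (a*(4*(k:ℝ)) + ((k:ℝ) + t - α)) ((1-a)*(4*(k:ℝ)) + ((k:ℝ) + q - t))
      = (4*(k:ℝ) + (2*(k:ℝ) + q - α))/2 - |c + ((t:ℝ) - t₀)| := by
    intro t
    rw [e1 t, e2 t, min_symm_abs]
  have hHval : Hval k α q = 40*(k:ℝ) + (4*(k:ℝ) + (2*(k:ℝ) + q - α))/2 := rfl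
  have hM1 : 11*(k:ℝ) + 1 ≤ Hval k α q - |c| := by rw [hHval]; linarith
  have hM2 : ∀ t : ℕ, t < k →
      min (a*(4*(k:ℝ)) + ((k:ℝ) + t - α)) ((1-a)*(4*(k:ℝ)) + ((k:ℝ) + q - t)) + 40*(k:ℝ)
        ≤ Hval k α q - |c| := by
    intro t ht
    rw [hTent t, hHval]
    have := abs_le_abs_add_gap hc (nat_cast_gap t t₀)
    linarith
  unfold WGraph.eccOn
  refine le_antisymm ?_ ?_
  · -- upper bound
    apply Real.sSup_le
    · rintro x ⟨s, t, hadj, b, hb, rfl⟩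
      exact ecc_ub hk hα hq ha0 ha1 hM1 hM2 s t hadj hb.1 hb.2
    · rw [hHval]; linarith
  · -- lower bound
    have hbdd : BddAbove {x | ∃ s t, (Gkl k l).adj s t = true ∧ ∃ b ∈ Icc (0:ℝ) 1,
        x = (Gkl k l).pdist ⟨α, by omega⟩ ⟨2*k + q, by omega⟩ a s t b} := by
      refine ⟨Hval k α q - |c|, ?_⟩
      rintro x ⟨s, t, hadj, b, hb, rfl⟩
      exact ecc_ub hk hα hq ha0 ha1 hM1 hM2 s t hadj hb.1 hb.2
    have hadjsp : (Gkl k l).adj (⟨k + t₀, by omega⟩ : Fin (4*k)) ⟨3*k + t₀, by omega⟩ = true :=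
      Gkl_adj_spike ht₀ _ _
    have hmem : (Gkl k l).pdist ⟨α, by omega⟩ ⟨2*k + q, by omega⟩ a ⟨k + t₀, by omega⟩
        ⟨3*k + t₀, by omega⟩ 1 ∈ {x | ∃ s t, (Gkl k l).adj s t = true ∧ ∃ b ∈ Icc (0:ℝ) 1,
        x = (Gkl k l).pdist ⟨α, by omega⟩ ⟨2*k + q, by omega⟩ a s t b} :=
      ⟨_, _, hadjsp, 1, ⟨by norm_num, le_refl 1⟩, rfl⟩
    refine le_trans ?_ (le_csSup hbdd hmem)
    have hwαβ : (Gkl k l).w (⟨α, by omega⟩ : Fin (4*k)) ⟨2*k + q, by omega⟩ = 4*(k:ℝ) := by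
      rw [Gkl_w_eq]
      show wfun k α (2*k+q) = _
      exact wfun_desig hα (by omega) (by omega)
    have hwsp : (Gkl k l).w (⟨k + t₀, by omega⟩ : Fin (4*k)) ⟨3*k + t₀, by omega⟩
        = 40*(k:ℝ) := by
      rw [Gkl_w_eq]
      show wfun k (k + t₀) (3*k + t₀) = _
      exact wfun_spike (by omega) (by omega) (by omega)
    have habs1 : |((k + t₀ : ℕ):ℝ) - (α:ℝ)| = (k:ℝ) + t₀ - α := by
      rw [abs_of_nonneg] <;> push_cast <;> linarith
    have hd1 : (k:ℝ) + t₀ - α ≤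
        (Gkl k l).vdist (⟨α, by omega⟩ : Fin (4*k)) ⟨k + t₀, by omega⟩ := by
      have h := Gkl_vdist_path_ge (l := l) hk (show α < 3*k by omega)
        (show k + t₀ < 3*k by omega) (show α < 4*k by omega) (show k + t₀ < 4*k by omega)
      rw [habs1] at h
      exact h
    have hd2 : (k:ℝ) + t₀ - α + 40*(k:ℝ) ≤
        (Gkl k l).vdist (⟨α, by omega⟩ : Fin (4*k)) ⟨3*k + t₀, by omega⟩ := by
      have h := Gkl_vdist_tip_ge (l := l) hk (show α < 3*k by omega) ht₀
        (show α < 4*k by omega) (show 3*k + t₀ < 4*k by omega)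
      have he : |((k:ℝ) + (t₀:ℝ)) - (α:ℝ)| = (k:ℝ) + t₀ - α := by
        rw [abs_of_nonneg] <;> linarith
      rw [he] at h
      linarith
    have habs2 : |((k + t₀ : ℕ):ℝ) - ((2*k + q : ℕ):ℝ)| = (k:ℝ) + q - t₀ := by
      rw [abs_of_nonpos] <;> push_cast <;> linarith
    have hd3 : (k:ℝ) + q - t₀ ≤
        (Gkl k l).vdist (⟨2*k + q, by omega⟩ : Fin (4*k)) ⟨k + t₀, by omega⟩ := by
      have h := Gkl_vdist_path_ge (l := l) hk (show 2*k + q < 3*k by omega)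
        (show k + t₀ < 3*k by omega) (show 2*k + q < 4*k by omega)
        (show k + t₀ < 4*k by omega)
      rw [habs2] at h
      exact h
    have hd4 : (k:ℝ) + q - t₀ + 40*(k:ℝ) ≤
        (Gkl k l).vdist (⟨2*k + q, by omega⟩ : Fin (4*k)) ⟨3*k + t₀, by omega⟩ := by
      have h := Gkl_vdist_tip_ge (l := l) hk (show 2*k + q < 3*k by omega) ht₀
        (show 2*k + q < 4*k by omega) (show 3*k + t₀ < 4*k by omega)
      have he : |((k:ℝ) + (t₀:ℝ)) - ((2*k + q:ℕ):ℝ)| = (k:ℝ) + q - t₀ := by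
        rw [abs_of_nonpos] <;> push_cast <;> linarith
      rw [he] at h
      linarith
    have he1 := e1 t₀
    have he2' := e2 t₀
    rw [sub_self] at he1 he2'
    refine (Gkl k l).le_pdist ?_ ?_ ?_ ?_ ?_ ?_
    · rintro ⟨h, -⟩
      rw [Fin.mk.injEq] at h
      omega
    · rintro ⟨h, -⟩
      rw [Fin.mk.injEq] at h
      omega
    · rw [hwαβ, hwsp, hHval]
      nlinarith [hd1]
    · rw [hwαβ, hwsp, hHval]
      nlinarith [hd2]
    · rw [hwαβ, hwsp, hHval]
      nlinarith [hd3]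
    · rw [hwαβ, hwsp, hHval]
      nlinarith [hd4]

end EvalSec

section Counting
variable {k l : ℕ}

def E0 (k l : ℕ) : Finset (Fin (4*k) × Fin (4*k)) :=
  Finset.univ.filter (fun p => Rel0 k l p.1.val p.2.val)

lemma edgeFinset_eq :
    (Gkl k l).toSimple.edgeFinset = (E0 k l).image (fun p => s(p.1, p.2)) := by
  ext e
  induction e with
  | _ u v =>
    rw [SimpleGraph.mem_edgeFinset, SimpleGraph.mem_edgeSet, Finset.mem_image]
    constructor
    · intro hadj
      have : (Gkl k l).adj u v = true := hadj
      rw [Gkl_adj_iff] at this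
      rcases this with h | h
      · exact ⟨(u, v), Finset.mem_filter.mpr ⟨Finset.mem_univ _, h⟩, rfl⟩
      · exact ⟨(v, u), Finset.mem_filter.mpr ⟨Finset.mem_univ _, h⟩, Sym2.eq_swap⟩
    · rintro ⟨p, hp, he⟩
      have hrel : Rel0 k l p.1.val p.2.val := (Finset.mem_filter.mp hp).2
      rw [Sym2.eq_iff] at he
      show (Gkl k l).adj u v = true
      rw [Gkl_adj_iff]
      rcases he with ⟨h1, h2⟩ | ⟨h1, h2⟩
      · left; rw [← h1, ← h2]; exact hrel
      · right; rw [← h1, ← h2]; exact hrel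

lemma E0_inj : Set.InjOn (fun p : Fin (4*k) × Fin (4*k) => s(p.1, p.2)) (E0 k l) := by
  intro p hp p' hp' he
  have h1 : Rel0 k l p.1.val p.2.val := (Finset.mem_filter.mp hp).2
  have h2 : Rel0 k l p'.1.val p'.2.val := (Finset.mem_filter.mp hp').2
  simp only [Sym2.eq_iff] at he
  rcases he with ⟨ha, hb⟩ | ⟨ha, hb⟩
  · exact Prod.ext ha hb
  · exfalso
    have l1 := h1.lt
    have l2 := h2.lt
    have e1 : p.1.val = p'.2.val := by rw [ha]
    have e2 : p.2.val = p'.1.val := by rw [hb]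
    omega

lemma edge_card (hk : 2 ≤ k) (hlk : l ≤ k^2) :
    (Gkl k l).toSimple.edgeFinset.card = 4*k - 1 + l := by
  rw [edgeFinset_eq, Finset.card_image_of_injOn E0_inj]
  -- split the filter
  have hsplit : E0 k l =
      (Finset.univ.filter (fun p : Fin (4*k) × Fin (4*k) =>
        p.2.val = p.1.val + 1 ∧ p.2.val < 3*k)) ∪
      ((Finset.univ.filter (fun p : Fin (4*k) × Fin (4*k) =>
        p.2.val = p.1.val + 2*k ∧ k ≤ p.1.val ∧ p.1.val < 2*k)) ∪
      (Finset.univ.filter (fun p : Fin (4*k) × Fin (4*k) =>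
        p.1.val < k ∧ 2*k ≤ p.2.val ∧ p.2.val < 3*k ∧ p.1.val + k * (p.2.val - 2*k) < l))) := by
    unfold E0 Rel0
    rw [← Finset.filter_or, ← Finset.filter_or]
  rw [hsplit]
  rw [Finset.card_union_of_disjoint, Finset.card_union_of_disjoint]
  · have c1 : (Finset.univ.filter (fun p : Fin (4*k) × Fin (4*k) =>
        p.2.val = p.1.val + 1 ∧ p.2.val < 3*k)).card = 3*k - 1 := by
      refine Eq.trans ?_ (Finset.card_range (3*k-1))
      refine Finset.card_bij' (fun p _ => p.1.val)
        (fun m hm => (⟨m, by rw [Finset.mem_range] at hm; omega⟩,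
          ⟨m + 1, by rw [Finset.mem_range] at hm; omega⟩)) ?_ ?_ ?_ ?_
      · intro p hp
        rw [Finset.mem_filter] at hp
        rw [Finset.mem_range]
        omega
      · intro m hm
        rw [Finset.mem_range] at hm
        rw [Finset.mem_filter]
        refine ⟨Finset.mem_univ _, ?_⟩
        dsimp only
        omega
      · intro p hp
        rw [Finset.mem_filter] at hp
        obtain ⟨-, h1, h2⟩ := hp
        ext <;> dsimp only <;> omega
      · intro m hm
        dsimp only
    have c2 : (Finset.univ.filter (fun p : Fin (4*k) × Fin (4*k) =>
        p.2.val = p.1.val + 2*k ∧ k ≤ p.1.val ∧ p.1.val < 2*k)).card = k := by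
      refine Eq.trans ?_ (Finset.card_range k)
      refine Finset.card_bij' (fun p _ => p.1.val - k)
        (fun m hm => (⟨k + m, by rw [Finset.mem_range] at hm; omega⟩,
          ⟨3*k + m, by rw [Finset.mem_range] at hm; omega⟩)) ?_ ?_ ?_ ?_
      · intro p hp
        rw [Finset.mem_filter] at hp
        rw [Finset.mem_range]
        omega
      · intro m hm
        rw [Finset.mem_range] at hm
        rw [Finset.mem_filter]
        refine ⟨Finset.mem_univ _, ?_⟩
        dsimp only
        omega
      · intro p hp
        rw [Finset.mem_filter] at hp
        obtain ⟨-, h1, h2, h3⟩ := hp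
        ext <;> dsimp only <;> omega
      · intro m hm
        rw [Finset.mem_range] at hm
        dsimp only
        omega
    have c3 : (Finset.univ.filter (fun p : Fin (4*k) × Fin (4*k) =>
        p.1.val < k ∧ 2*k ≤ p.2.val ∧ p.2.val < 3*k ∧ p.1.val + k * (p.2.val - 2*k) < l)).card
        = l := by
      refine Eq.trans ?_ (Finset.card_range l)
      have hkk : l ≤ k * k := by
        have hsq : k^2 = k*k := sq k
        omega
      refine Finset.card_bij' (fun p _ => p.1.val + k * (p.2.val - 2*k))
        (fun r hr => (⟨r % k, Nat.lt_of_lt_of_le (Nat.mod_lt r (by omega)) (by omega)⟩,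
          ⟨2*k + r / k, by
            rw [Finset.mem_range] at hr
            have h := Nat.div_lt_of_lt_mul (show r < k*k by omega)
            exact Nat.lt_of_lt_of_le (Nat.add_lt_add_left h (2*k)) (by omega)⟩)) ?_ ?_ ?_ ?_
      · intro p hp
        rw [Finset.mem_filter] at hp
        rw [Finset.mem_range]
        exact hp.2.2.2.2
      · intro r hr
        rw [Finset.mem_range] at hr
        rw [Finset.mem_filter]
        have hdiv : r / k < k := Nat.div_lt_of_lt_mul (by omega)
        have hmod : r % k < k := Nat.mod_lt r (by omega)
        have hmd := Nat.mod_add_div r k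
        refine ⟨Finset.mem_univ _, ?_⟩
        dsimp only
        refine ⟨hmod, Nat.le_add_right _ _, ?_, ?_⟩
        · exact Nat.lt_of_lt_of_le (Nat.add_lt_add_left hdiv (2*k)) (by omega)
        · rw [Nat.add_sub_cancel_left, hmd]
          exact hr
      · intro p hp
        rw [Finset.mem_filter] at hp
        obtain ⟨-, h1, h2, h3, h4⟩ := hp
        have hmod : (p.1.val + k * (p.2.val - 2*k)) % k = p.1.val := by
          rw [Nat.add_mul_mod_self_left, Nat.mod_eq_of_lt h1]
        have hdiv : (p.1.val + k * (p.2.val - 2*k)) / k = p.2.val - 2*k := by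
          rw [Nat.add_mul_div_left _ _ (show 0 < k by omega), Nat.div_eq_of_lt h1]
          omega
        ext
        · dsimp only
          rw [hmod]
        · dsimp only
          rw [hdiv]
          omega
      · intro r hr
        rw [Finset.mem_range] at hr
        have hmd := Nat.mod_add_div r k
        dsimp only
        rw [Nat.add_sub_cancel_left]
        exact hmd
    rw [c1, c2, c3]
    omega
  · -- disjoint: spike vs desig
    rw [Finset.disjoint_filter]
    rintro p - ⟨h1, h2, h3⟩ ⟨h4, h5, h6, h7⟩
    omega
  · -- disjoint: path vs (spike ∪ desig)
    rw [Finset.disjoint_left]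
    rintro p hp hq
    rw [Finset.mem_filter] at hp
    rw [Finset.mem_union, Finset.mem_filter, Finset.mem_filter] at hq
    obtain ⟨-, h1, h2⟩ := hp
    rcases hq with ⟨-, h3, h4, h5⟩ | ⟨-, h3, h4, h5, h6⟩ <;> omega

end Counting

set_option maxHeartbeats 1600000 in
/-- Lower-bound construction: for every `k ≥ 2` and `0 < l ≤ k²` there is a connected
network with `4k` vertices and `4k-1+l` edges, together with `l` designated (pairwise
distinct) edges, such that on each designated edge the eccentricity function needs at
least `2k-2` linear pieces; hence the eccentricity diagram has `Ω(kl)` edges. -/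
theorem eccentricity_diagram_lower_bound (k l : ℕ) (hk : 2 ≤ k) (hl : 0 < l)
    (hlk : l ≤ k ^ 2) :
    ∃ (G : WGraph (4 * k)) (L : Finset (Fin (4 * k) × Fin (4 * k))),
      G.toSimple.Connected ∧
      G.toSimple.edgeFinset.card = 4 * k - 1 + l ∧
      L.card = l ∧
      (∀ e ∈ L, G.adj e.1 e.2 = true) ∧
      (∀ e ∈ L, ∀ f ∈ L, e ≠ f → s(e.1, e.2) ≠ s(f.1, f.2)) ∧
      ∀ e ∈ L, ∀ N : ℕ, PWAffine (fun a => G.eccOn e.1 e.2 a) N → 2 * k - 2 ≤ N := by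
  have hkk : l ≤ k * k := by
    have hsq : k^2 = k*k := sq k
    omega
  have hk0 : 0 < k := by omega
  set eDes : ℕ → Fin (4*k) × Fin (4*k) := fun r =>
    ((⟨r % k, Nat.lt_of_lt_of_le (Nat.mod_lt _ hk0) (by omega)⟩ : Fin (4*k)),
     (⟨2*k + r / k % k, by
        have h := Nat.mod_lt (r / k) hk0
        omega⟩ : Fin (4*k))) with heDes
  have hdm : ∀ r, r < l → r / k % k = r / k := by
    intro r hr
    exact Nat.mod_eq_of_lt (Nat.div_lt_of_lt_mul (by omega))
  refine ⟨Gkl k l, (Finset.range l).image eDes, Gkl_connected hk, edge_card hk hlk, ?_, ?_, ?_, ?_⟩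
  · -- cardinality of L
    rw [Finset.card_image_of_injOn, Finset.card_range]
    intro r hr r' hr' h
    rw [Finset.mem_coe, Finset.mem_range] at hr hr'
    rw [heDes] at h
    simp only [Prod.mk.injEq, Fin.mk.injEq] at h
    obtain ⟨h1, h2⟩ := h
    rw [hdm r hr, hdm r' hr'] at h2
    have h2' : r / k = r' / k := by omega
    have e1 := Nat.mod_add_div r k
    have e2 := Nat.mod_add_div r' k
    rw [h1, h2'] at e1
    omega
  · -- members of L are adjacent
    intro e he
    rw [Finset.mem_image] at he
    obtain ⟨r, hr, rfl⟩ := he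
    rw [Finset.mem_range] at hr
    rw [heDes, Gkl_adj_iff]
    left
    dsimp only
    refine Or.inr (Or.inr ⟨Nat.mod_lt _ hk0, Nat.le_add_right _ _, ?_, ?_⟩)
    · have h := Nat.mod_lt (r / k) hk0
      omega
    · rw [Nat.add_sub_cancel_left, hdm r hr]
      have hmd := Nat.mod_add_div r k
      omega
  · -- distinct elements of L give distinct edges
    intro e he f hf hne hcon
    rw [Finset.mem_image] at he hf
    obtain ⟨r, hr, rfl⟩ := he
    obtain ⟨r', hr', rfl⟩ := hf
    rw [Sym2.eq_iff] at hcon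
    rcases hcon with ⟨h1, h2⟩ | ⟨h1, h2⟩
    · apply hne
      exact Prod.ext h1 h2
    · have hval := congrArg Fin.val h1
      rw [heDes] at hval
      dsimp only at hval
      have hmr := Nat.mod_lt r hk0
      omega
  · -- the eccentricity lower bound on each designated edge
    intro e he N hPW
    rw [Finset.mem_image] at he
    obtain ⟨r, hr, rfl⟩ := he
    rw [Finset.mem_range] at hr
    set α : ℕ := r % k with hαdef
    set q : ℕ := r / k % k with hqdef
    have hα : α < k := Nat.mod_lt _ hk0
    have hq : q < k := Nat.mod_lt _ hk0
    have hecc : ∀ t₀ : ℕ, t₀ < k → ∀ c : ℝ, |c| ≤ 1/2 →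
        (Gkl k l).eccOn (eDes r).1 (eDes r).2 (astar k α q t₀ + c/(4*(k:ℝ)))
          = Hval k α q - |c| := by
      intro t₀ ht₀ c hc
      exact ecc_eval hk hα hq t₀ ht₀ c hc
    have hK : (2:ℝ) ≤ (k:ℝ) := by exact_mod_cast hk
    have hK0 : (0:ℝ) < k := by linarith
    have hαR : (α:ℝ) ≤ (k:ℝ) - 1 := by
      have h := (Nat.cast_le (α := ℝ)).mpr (show α + 1 ≤ k from hα)
      push_cast at h
      linarith
    have hqR : (q:ℝ) ≤ (k:ℝ) - 1 := by
      have h := (Nat.cast_le (α := ℝ)).mpr (show q + 1 ≤ k from hq)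
      push_cast at h
      linarith
    have hαR0 : (0:ℝ) ≤ α := Nat.cast_nonneg _
    have hqR0 : (0:ℝ) ≤ q := Nat.cast_nonneg _
    have hk1 : ((k-1:ℕ):ℝ) = (k:ℝ) - 1 := by
      rw [Nat.cast_sub (by omega)]
      simp
    have hstar : ∀ s : ℕ, s ≤ k-1 →
        astar k α q (k-1-s) = astar k α q (k-1) + (2*(s:ℝ))/(8*(k:ℝ)) := by
      intro s hs
      unfold astar
      have hc1 : ((k-1-s:ℕ):ℝ) = ((k-1:ℕ):ℝ) - (s:ℝ) := by
        rw [Nat.cast_sub hs]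
      rw [hc1]
      field_simp
      ring
    have hbase_lb : 1/4 ≤ astar k α q (k-1) := by
      unfold astar
      rw [hk1]
      have h2 : -(1:ℝ)/4 ≤ ((α:ℝ) + q - 2*((k:ℝ)-1))/(8*(k:ℝ)) := by
        rw [le_div_iff₀ (by positivity)]
        nlinarith
      linarith
    have hbase_ub : astar k α q (k-1) ≤ 1/2 := by
      unfold astar
      rw [hk1]
      have h2 : ((α:ℝ) + q - 2*((k:ℝ)-1))/(8*(k:ℝ)) ≤ 0 :=
        div_nonpos_of_nonpos_of_nonneg (by linarith) (by positivity)
      linarith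
    have h32 : (0:ℝ) < 1/(32*(k:ℝ)) := by positivity
    have h32' : 1/(32*(k:ℝ)) ≤ 1/64 := by
      rw [div_le_div_iff₀ (by positivity) (by norm_num)]
      linarith
    have hml : (2*k-3) + 1 ≤ N := by
      refine pw_lower_bound hPW
        (fun j => astar k α q (k-1) + (j:ℝ)/(8*(k:ℝ)) - 1/(32*(k:ℝ)))
        (fun j => astar k α q (k-1) + (j:ℝ)/(8*(k:ℝ)))
        (fun j => astar k α q (k-1) + (j:ℝ)/(8*(k:ℝ)) + 1/(32*(k:ℝ)))
        ?_ ?_ ?_ ?_ ?_ ?_ ?_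
      · -- 0 < x j
        intro j hj
        have hj0 : (0:ℝ) ≤ (j:ℝ)/(8*(k:ℝ)) := by positivity
        linarith
      · -- z j < 1
        intro j hj
        have hjb : (j:ℝ) + 4 ≤ 2*(k:ℝ) := by exact_mod_cast (show j + 4 ≤ 2*k by omega)
        have hterm : (j:ℝ)/(8*(k:ℝ)) ≤ 1/4 := by
          rw [div_le_iff₀ (by positivity)]
          linarith
        linarith
      · -- x < y
        intro j hj
        linarith
      · -- y < z
        intro j hj
        linarith
      · -- midpoint
        intro j hj
        ring
      · -- the non-affineness witnesses
        intro j hj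
        rcases Nat.even_or_odd j with ⟨s, hs⟩ | ⟨s, hs⟩
        · -- even case : peak
          have hsk : s ≤ k - 2 := by omega
          have ht₀ : k - 1 - s < k := by omega
          have hst := hstar s (by omega)
          have hjs : (j:ℝ) = 2*(s:ℝ) := by
            rw [hs]; push_cast; ring
          have hx := hecc (k-1-s) ht₀ (-(1/8)) (by rw [abs_le]; constructor <;> norm_num)
          have hy := hecc (k-1-s) ht₀ 0 (by rw [abs_le]; constructor <;> norm_num)
          have hz := hecc (k-1-s) ht₀ (1/8) (by rw [abs_le]; constructor <;> norm_num)
          rw [show astar k α q (k-1-s) + (-(1/8))/(4*(k:ℝ))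
              = astar k α q (k-1) + (j:ℝ)/(8*(k:ℝ)) - 1/(32*(k:ℝ)) by
            rw [hst, hjs]; field_simp; ring] at hx
          rw [show astar k α q (k-1-s) + (0:ℝ)/(4*(k:ℝ))
              = astar k α q (k-1) + (j:ℝ)/(8*(k:ℝ)) by
            rw [hst, hjs]; field_simp; ring] at hy
          rw [show astar k α q (k-1-s) + (1/8)/(4*(k:ℝ))
              = astar k α q (k-1) + (j:ℝ)/(8*(k:ℝ)) + 1/(32*(k:ℝ)) by
            rw [hst, hjs]; field_simp; ring] at hz
          rw [hx, hy, hz]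
          rw [show |(-(1/8):ℝ)| = 1/8 by norm_num, show |(0:ℝ)| = 0 by norm_num,
            show |(1/8:ℝ)| = 1/8 by norm_num]
          intro hcon
          linarith
        · -- odd case : valley
          have hsk : s ≤ k - 3 := by omega
          have ht₀ : k - 2 - s < k := by omega
          have ht₁ : k - 1 - s < k := by omega
          have hst1 := hstar s (by omega)
          have hst2 := hstar (s+1) (by omega)
          rw [show k - 1 - (s+1) = k - 2 - s from by omega] at hst2
          have hjs : (j:ℝ) = 2*(s:ℝ) + 1 := by
            rw [hs]; push_cast; ring
          have hx := hecc (k-1-s) ht₁ (3/8) (by rw [abs_le]; constructor <;> norm_num)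
          have hy := hecc (k-2-s) ht₀ (-(1/2)) (by rw [abs_le]; constructor <;> norm_num)
          have hz := hecc (k-2-s) ht₀ (-(3/8)) (by rw [abs_le]; constructor <;> norm_num)
          rw [show astar k α q (k-1-s) + (3/8)/(4*(k:ℝ))
              = astar k α q (k-1) + (j:ℝ)/(8*(k:ℝ)) - 1/(32*(k:ℝ)) by
            rw [hst1, hjs]; field_simp; ring] at hx
          rw [show astar k α q (k-2-s) + (-(1/2))/(4*(k:ℝ))
              = astar k α q (k-1) + (j:ℝ)/(8*(k:ℝ)) by
            rw [hst2, hjs]; push_cast; field_simp; ring] at hy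
          rw [show astar k α q (k-2-s) + (-(3/8))/(4*(k:ℝ))
              = astar k α q (k-1) + (j:ℝ)/(8*(k:ℝ)) + 1/(32*(k:ℝ)) by
            rw [hst2, hjs]; push_cast; field_simp; ring] at hz
          rw [hx, hy, hz]
          rw [show |(3/8:ℝ)| = 3/8 by norm_num, show |(-(1/2):ℝ)| = 1/2 by norm_num,
            show |(-(3/8):ℝ)| = 3/8 by norm_num]
          intro hcon
          linarith
      · -- separation
        intro j hj
        push_cast
        have he : ((j:ℝ)+1)/(8*(k:ℝ)) = (j:ℝ)/(8*(k:ℝ)) + 4*(1/(32*(k:ℝ))) := by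
          field_simp
          ring
        rw [he]
        linarith
    omega
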